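/- Fix z ∈ ℝ and let f_z be the Stein solution f_z(x) = e^{x²/2} ∫_{-∞}^{x} (1_{(-∞,z]}(a) − Φ(z)) e^{−a²/2} da. Then f_z is Lipschitz on ℝ with Lipschitz constant at most 2. -/

import Mathlib

open MeasureTheory ProbabilityTheory Real


/-- The standard normal cumulative distribution function. -/
noncomputable def stdNormalCDF (z : ℝ) : ℝ :=
    (gaussianReal 0 1 (Set.Iic z)).toReal

/-- The solution of the Stein equation associated with level `z`. -/
noncomputable def steinSolution (z x : ℝ) : ℝ :=
    Real.exp (x ^ 2 / 2) *
      ∫ a in Set.Iio x,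
        (Set.indicator (Set.Iic z) (fun _ => (1 : ℝ)) a - stdNormalCDF z) * Real.exp (-a ^ 2 / 2)

noncomputable def stE (a : ℝ) : ℝ := Real.exp (-a ^ 2 / 2)

lemma stE_eq : stE = fun a => Real.exp (-(1/2) * a ^ 2) := by
  funext a; unfold stE; ring_nf

lemma stE_cont : Continuous stE := by
  unfold stE; fun_prop

lemma stE_int : Integrable stE := by
  rw [stE_eq]; exact integrable_exp_neg_mul_sq (by norm_num)

lemma stE_pos (a : ℝ) : 0 < stE a := Real.exp_pos _

noncomputable def stJ (x : ℝ) : ℝ := ∫ a in Set.Iio x, stE a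

noncomputable def stT (x : ℝ) : ℝ := ∫ a in Set.Ioi x, stE a

noncomputable def stS : ℝ := Real.sqrt (2 * π)

lemma stS_pos : 0 < stS := Real.sqrt_pos.mpr (by positivity)

lemma stJ_add_stT (x : ℝ) : stJ x + stT x = stS := by
  have h1 : stJ x + (∫ a in Set.Ici x, stE a) = ∫ a, stE a := by
    simpa [stJ] using integral_add_compl measurableSet_Iio stE_int
  have h2 : (∫ a in Set.Ici x, stE a) = stT x :=
    setIntegral_congr_set Ioi_ae_eq_Ici.symm
  have h3 : (∫ a, stE a) = stS := by
    rw [stE_eq, integral_gaussian]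
    unfold stS
    norm_num
    rw [mul_comm]
  rw [← h3, ← h1, h2]

lemma stJ_Iic (x : ℝ) : (∫ a in Set.Iic x, stE a) = stJ x :=
  setIntegral_congr_set Iio_ae_eq_Iic.symm

lemma stJ_nonneg (x : ℝ) : 0 ≤ stJ x :=
  setIntegral_nonneg measurableSet_Iio fun a _ => (stE_pos a).le

lemma stT_nonneg (x : ℝ) : 0 ≤ stT x :=
  setIntegral_nonneg measurableSet_Ioi fun a _ => (stE_pos a).le

lemma stJ_le_stS (x : ℝ) : stJ x ≤ stS := by
  have := stJ_add_stT x; have := stT_nonneg x; linarith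

lemma stJ_mono {x y : ℝ} (h : x ≤ y) : stJ x ≤ stJ y := by
  apply setIntegral_mono_set stE_int.integrableOn
    (Filter.Eventually.of_forall fun a => (stE_pos a).le)
  exact HasSubset.Subset.eventuallyLE (Set.Iio_subset_Iio h)

lemma stdNormalCDF_eq (z : ℝ) : stdNormalCDF z = stJ z / stS := by
  rw [stdNormalCDF, gaussianReal_apply_eq_integral 0 one_ne_zero]
  have : ∀ a : ℝ, gaussianPDFReal 0 1 a = stS⁻¹ * stE a := by
    intro a
    simp [gaussianPDFReal, stS, stE]
  simp_rw [this]
  rw [integral_const_mul, stJ_Iic, div_eq_inv_mul]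
  exact ENNReal.toReal_ofReal (mul_nonneg (inv_nonneg.mpr stS_pos.le) (stJ_nonneg z))

lemma stJ_sub (x y : ℝ) : stJ y - stJ x = ∫ a in x..y, stE a := by
  rw [← stJ_Iic, ← stJ_Iic]
  exact intervalIntegral.integral_Iic_sub_Iic stE_int.integrableOn stE_int.integrableOn

lemma stJ_hasDerivAt (x : ℝ) : HasDerivAt stJ (stE x) x := by
  have h : HasDerivAt (fun y => stJ 0 + ∫ a in (0:ℝ)..y, stE a) (stE x) x :=
    ((stE_cont.integral_hasStrictDerivAt 0 x).hasDerivAt).const_add (stJ 0)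
  have : (fun y => stJ 0 + ∫ a in (0:ℝ)..y, stE a) = stJ := by
    funext y; rw [← stJ_sub]; ring
  rwa [this] at h

lemma stJ_cont : Continuous stJ := by
  have := fun x => (stJ_hasDerivAt x).continuousAt
  exact continuous_iff_continuousAt.mpr this

lemma stMulInt : Integrable (fun a : ℝ => a * stE a) := by
  have := integrable_mul_exp_neg_mul_sq (b := 1/2) (by norm_num)
  refine this.congr ?_
  refine Filter.Eventually.of_forall fun a => ?_
  unfold stE; ring_nf

lemma stT_mul_eq {x : ℝ} : ∫ a in Set.Ioi x, a * stE a = stE x := by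
  have hderiv : ∀ a ∈ Set.Ioi x, HasDerivAt (fun a : ℝ => -stE a) (a * stE a) a := by
    intro a _
    have h1 : HasDerivAt (fun a : ℝ => -a ^ 2 / 2) (-a) a := by
      have := ((hasDerivAt_pow 2 a).neg).div_const 2
      simpa using this.congr_deriv (by ring)
    have := (h1.exp).neg
    unfold stE
    refine this.congr_deriv ?_
    ring
  have htend : Filter.Tendsto (fun a : ℝ => -stE a) Filter.atTop (nhds 0) := by
    rw [show (0:ℝ) = -0 by ring]
    apply Filter.Tendsto.neg
    have h1 : Filter.Tendsto (fun a : ℝ => a ^ 2 / 2) Filter.atTop Filter.atTop :=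
      (Filter.tendsto_pow_atTop two_ne_zero).atTop_div_const (by norm_num)
    have := Real.tendsto_exp_neg_atTop_nhds_zero.comp h1
    refine this.congr fun a => ?_
    unfold stE
    simp only [Function.comp_apply]
    ring_nf
  have := MeasureTheory.integral_Ioi_of_hasDerivAt_of_tendsto
    (f := fun a : ℝ => -stE a) (f' := fun a : ℝ => a * stE a)
    (stE_cont.neg.continuousWithinAt) hderiv stMulInt.integrableOn htend
  rw [this]; ring

lemma stT_bound {x : ℝ} (hx : 0 < x) : x * stT x ≤ stE x := by
  have hmono : stT x ≤ ∫ a in Set.Ioi x, (1/x) * (a * stE a) := by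
    apply setIntegral_mono_on stE_int.integrableOn
      ((stMulInt.integrableOn).const_mul (1/x)) measurableSet_Ioi
    intro a ha
    have ha' : x < a := ha
    have h1 : 1 ≤ a / x := (one_le_div hx).mpr ha'.le
    have := mul_le_mul_of_nonneg_right h1 (stE_pos a).le
    rw [one_mul] at this
    calc stE a ≤ a / x * stE a := this
      _ = 1/x * (a * stE a) := by ring
  rw [integral_const_mul, stT_mul_eq] at hmono
  calc x * stT x ≤ x * (1/x * stE x) := by
        exact mul_le_mul_of_nonneg_left hmono hx.le
    _ = stE x := by field_simp

lemma stJ_eq_stT_neg (x : ℝ) : stJ x = stT (-x) := by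
  unfold stJ stT
  rw [show (∫ a in Set.Ioi (-x), stE a) = ∫ a in Set.Ioi (-x), stE (-a) by
    refine setIntegral_congr_fun measurableSet_Ioi fun a _ => ?_
    unfold stE; ring_nf]
  rw [integral_comp_neg_Ioi, neg_neg]
  exact (stJ_Iic x).symm

lemma stJ_bound {x : ℝ} (hx : x < 0) : (-x) * stJ x ≤ stE x := by
  rw [stJ_eq_stT_neg]
  have := stT_bound (x := -x) (by linarith)
  calc (-x) * stT (-x) ≤ stE (-x) := this
    _ = stE x := by unfold stE; ring_nf

noncomputable def stF1 (x : ℝ) : ℝ := Real.exp (x ^ 2 / 2) * stJ x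
noncomputable def stF2 (x : ℝ) : ℝ := Real.exp (x ^ 2 / 2) * (stS - stJ x)

lemma stExp_stE (x : ℝ) : Real.exp (x ^ 2 / 2) * stE x = 1 := by
  unfold stE
  rw [← Real.exp_add, show x ^ 2 / 2 + -x ^ 2 / 2 = 0 by ring, Real.exp_zero]

lemma stExp_hasDerivAt (x : ℝ) :
    HasDerivAt (fun x : ℝ => Real.exp (x ^ 2 / 2)) (x * Real.exp (x ^ 2 / 2)) x := by
  have h1 : HasDerivAt (fun x : ℝ => x ^ 2 / 2) x x := by
    have := (hasDerivAt_pow 2 x).div_const 2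
    refine this.congr_deriv ?_
    simp
  have := h1.exp
  refine this.congr_deriv ?_
  ring

lemma stF1_hasDerivAt (x : ℝ) : HasDerivAt stF1 (x * stF1 x + 1) x := by
  have := (stExp_hasDerivAt x).mul (stJ_hasDerivAt x)
  refine this.congr_deriv ?_
  unfold stF1
  rw [← stExp_stE x]
  ring

lemma stF2_hasDerivAt (x : ℝ) : HasDerivAt stF2 (x * stF2 x - 1) x := by
  have := (stExp_hasDerivAt x).mul ((stJ_hasDerivAt x).const_sub stS)
  refine this.congr_deriv ?_
  unfold stF2
  rw [← stExp_stE x]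
  ring

lemma ind_mul (z : ℝ) : (fun a => Set.indicator (Set.Iic z) (fun _ => (1:ℝ)) a * Real.exp (-a ^ 2 / 2))
    = Set.indicator (Set.Iic z) stE := by
  funext a
  by_cases h : a ∈ Set.Iic z <;> simp [h, stE]

lemma int_ind (z x : ℝ) : ∫ a in Set.Iio x, Set.indicator (Set.Iic z) stE a = stJ (min x z) := by
  rw [MeasureTheory.setIntegral_indicator measurableSet_Iic]
  rcases le_or_gt x z with h | h
  · have hset : Set.Iio x ∩ Set.Iic z = Set.Iio x := by
      ext a
      simp only [Set.mem_inter_iff, Set.mem_Iio, Set.mem_Iic, and_iff_left_iff_imp]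
      intro ha; exact le_trans ha.le h
    rw [hset, min_eq_left h]
    rfl
  · have hset : Set.Iio x ∩ Set.Iic z = Set.Iic z := by
      ext a
      simp only [Set.mem_inter_iff, Set.mem_Iio, Set.mem_Iic, and_iff_right_iff_imp]
      intro ha; exact lt_of_le_of_lt ha h
    rw [hset, min_eq_right h.le]
    exact stJ_Iic z

lemma stein_eq (z x : ℝ) :
    steinSolution z x = Real.exp (x ^ 2 / 2) * (stJ (min x z) - stJ z / stS * stJ x) := by
  unfold steinSolution
  congr 1
  have hint1 : IntegrableOn (fun a => Set.indicator (Set.Iic z) (fun _ => (1:ℝ)) a * Real.exp (-a ^ 2 / 2)) (Set.Iio x) := by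
    rw [ind_mul]
    exact (stE_int.indicator measurableSet_Iic).integrableOn
  have hint2 : IntegrableOn (fun a => stdNormalCDF z * Real.exp (-a ^ 2 / 2)) (Set.Iio x) := by
    have : (fun a : ℝ => stdNormalCDF z * Real.exp (-a ^ 2 / 2)) = fun a => stdNormalCDF z * stE a := rfl
    rw [this]
    exact (stE_int.const_mul _).integrableOn
  have : ∀ a : ℝ, (Set.indicator (Set.Iic z) (fun _ => (1:ℝ)) a - stdNormalCDF z) * Real.exp (-a ^ 2 / 2)
      = Set.indicator (Set.Iic z) (fun _ => (1:ℝ)) a * Real.exp (-a ^ 2 / 2)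
        - stdNormalCDF z * Real.exp (-a ^ 2 / 2) := fun a => by ring
  simp_rw [this]
  rw [MeasureTheory.integral_sub hint1 hint2]
  rw [show (∫ a in Set.Iio x, Set.indicator (Set.Iic z) (fun _ => (1:ℝ)) a * Real.exp (-a ^ 2 / 2))
      = ∫ a in Set.Iio x, Set.indicator (Set.Iic z) stE a from by rw [ind_mul]]
  rw [int_ind]
  rw [MeasureTheory.integral_const_mul, stdNormalCDF_eq]
  rfl

lemma stein_branch1 (z : ℝ) {x : ℝ} (hx : x ≤ z) :
    steinSolution z x = (1 - stJ z / stS) * stF1 x := by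
  rw [stein_eq, min_eq_left hx]
  unfold stF1
  ring

lemma stein_branch2 (z : ℝ) {x : ℝ} (hx : z ≤ x) :
    steinSolution z x = stJ z / stS * stF2 x := by
  rw [stein_eq, min_eq_right hx]
  unfold stF2
  have hS : stS ≠ 0 := stS_pos.ne'
  field_simp

lemma stF1_nonneg (x : ℝ) : 0 ≤ stF1 x := mul_nonneg (Real.exp_pos _).le (stJ_nonneg x)

lemma frac_nonneg (z : ℝ) : 0 ≤ stJ z / stS := div_nonneg (stJ_nonneg z) stS_pos.le
lemma frac_le_one (z : ℝ) : stJ z / stS ≤ 1 := (div_le_one stS_pos).mpr (stJ_le_stS z)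

lemma bound1 (z : ℝ) {x : ℝ} (hx : x ≤ z) :
    |(1 - stJ z / stS) * (x * stF1 x + 1)| ≤ 2 := by
  have hS := stS_pos
  have hc0 : 0 ≤ 1 - stJ z / stS := by linarith [frac_le_one z]
  have hc1 : 1 - stJ z / stS ≤ 1 := by linarith [frac_nonneg z]
  have he : (0:ℝ) < Real.exp (x ^ 2 / 2) := Real.exp_pos _
  have hF1 := stF1_nonneg x
  rcases le_or_gt x 0 with hx0 | hx0
  · have hub : x * stF1 x ≤ 0 := mul_nonpos_iff.mpr (Or.inr ⟨hx0, hF1⟩)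
    have hlb : -1 ≤ x * stF1 x := by
      rcases eq_or_lt_of_le hx0 with heq | hlt
      · rw [heq]; norm_num
      · have h1 := stJ_bound hlt
        have h2 : Real.exp (x ^ 2 / 2) * (-x * stJ x) ≤ Real.exp (x ^ 2 / 2) * stE x :=
          mul_le_mul_of_nonneg_left h1 he.le
        rw [stExp_stE] at h2
        unfold stF1
        nlinarith
    rw [abs_le]
    constructor <;> nlinarith
  · have htx := stT_bound hx0
    have hsum := stJ_add_stT x
    have h5 : (1 - stJ z / stS) * stJ x ≤ stT x := by
      rw [show (1 - stJ z / stS) = (stS - stJ z) / stS by field_simp,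
        div_mul_eq_mul_div, div_le_iff₀ hS]
      have h1 : stS - stJ z ≤ stT x := by linarith [stJ_mono hx]
      nlinarith [mul_le_mul_of_nonneg_right h1 (stJ_nonneg x),
        mul_le_mul_of_nonneg_left (stJ_le_stS x) (stT_nonneg x)]
    have h6 : (1 - stJ z / stS) * (x * stF1 x) ≤ 1 := by
      calc (1 - stJ z / stS) * (x * stF1 x)
          = (x * Real.exp (x ^ 2 / 2)) * ((1 - stJ z / stS) * stJ x) := by unfold stF1; ring
        _ ≤ (x * Real.exp (x ^ 2 / 2)) * stT x :=
            mul_le_mul_of_nonneg_left h5 (by positivity)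
        _ = Real.exp (x ^ 2 / 2) * (x * stT x) := by ring
        _ ≤ Real.exp (x ^ 2 / 2) * stE x := mul_le_mul_of_nonneg_left htx he.le
        _ = 1 := stExp_stE x
    have h7 : 0 ≤ (1 - stJ z / stS) * (x * stF1 x) :=
      mul_nonneg hc0 (mul_nonneg hx0.le hF1)
    rw [abs_le]
    constructor <;> nlinarith

lemma bound2 (z : ℝ) {x : ℝ} (hx : z ≤ x) :
    |stJ z / stS * (x * stF2 x - 1)| ≤ 2 := by
  have hS := stS_pos
  have hc0 := frac_nonneg z
  have hc1 := frac_le_one z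
  have he : (0:ℝ) < Real.exp (x ^ 2 / 2) := Real.exp_pos _
  have hsum := stJ_add_stT x
  have hT : stS - stJ x = stT x := by linarith
  have hF2 : 0 ≤ stF2 x := by
    unfold stF2; rw [hT]; exact mul_nonneg he.le (stT_nonneg x)
  rcases le_or_gt 0 x with hx0 | hx0
  · have hub : x * stF2 x ≤ 1 := by
      rcases eq_or_lt_of_le hx0 with heq | hlt
      · rw [← heq]; norm_num
      · have htx := stT_bound hlt
        calc x * stF2 x = Real.exp (x ^ 2 / 2) * (x * stT x) := by unfold stF2; rw [hT]; ring
          _ ≤ Real.exp (x ^ 2 / 2) * stE x := mul_le_mul_of_nonneg_left htx he.le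
          _ = 1 := stExp_stE x
    have hlb : 0 ≤ x * stF2 x := mul_nonneg hx0 hF2
    rw [abs_le]
    constructor <;> nlinarith
  · have h1 := stJ_bound hx0
    have h5 : stJ z / stS * stT x ≤ stJ x := by
      rw [div_mul_eq_mul_div, div_le_iff₀ hS]
      nlinarith [mul_le_mul_of_nonneg_right (stJ_mono hx) (stT_nonneg x),
        mul_le_mul_of_nonneg_left (show stT x ≤ stS by linarith [stJ_nonneg x]) (stJ_nonneg x)]
    have h6 : stJ z / stS * (-x * stF2 x) ≤ 1 := by
      calc stJ z / stS * (-x * stF2 x)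
          = (-x * Real.exp (x ^ 2 / 2)) * (stJ z / stS * stT x) := by unfold stF2; rw [hT]; ring
        _ ≤ (-x * Real.exp (x ^ 2 / 2)) * stJ x :=
            mul_le_mul_of_nonneg_left h5 (by nlinarith)
        _ = Real.exp (x ^ 2 / 2) * (-x * stJ x) := by ring
        _ ≤ Real.exp (x ^ 2 / 2) * stE x := mul_le_mul_of_nonneg_left h1 he.le
        _ = 1 := stExp_stE x
    have h7 : 0 ≤ stJ z / stS * (-x * stF2 x) :=
      mul_nonneg hc0 (mul_nonneg (by linarith) hF2)
    rw [abs_le]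
    constructor <;> nlinarith

lemma lip1 (z : ℝ) {x y : ℝ} (hx : x ≤ z) (hy : y ≤ z) :
    |steinSolution z x - steinSolution z y| ≤ 2 * |x - y| := by
  have hderiv : ∀ t ∈ Set.Iic z, HasDerivWithinAt (steinSolution z)
      ((1 - stJ z / stS) * (t * stF1 t + 1)) (Set.Iic z) t := by
    intro t ht
    have h := (((stF1_hasDerivAt t).const_mul (1 - stJ z / stS)).hasDerivWithinAt
      (s := Set.Iic z))
    exact h.congr (fun u hu => stein_branch1 z hu) (stein_branch1 z ht)
  have hbound : ∀ t ∈ Set.Iic z, ‖(1 - stJ z / stS) * (t * stF1 t + 1)‖ ≤ 2 := by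
    intro t ht
    rw [Real.norm_eq_abs]; exact bound1 z ht
  have := Convex.norm_image_sub_le_of_norm_hasDerivWithin_le hderiv hbound
    (convex_Iic z) hy hx
  simpa [Real.norm_eq_abs] using this

lemma lip2 (z : ℝ) {x y : ℝ} (hx : z ≤ x) (hy : z ≤ y) :
    |steinSolution z x - steinSolution z y| ≤ 2 * |x - y| := by
  have hderiv : ∀ t ∈ Set.Ici z, HasDerivWithinAt (steinSolution z)
      (stJ z / stS * (t * stF2 t - 1)) (Set.Ici z) t := by
    intro t ht
    have h := (((stF2_hasDerivAt t).const_mul (stJ z / stS)).hasDerivWithinAt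
      (s := Set.Ici z))
    exact h.congr (fun u hu => stein_branch2 z hu) (stein_branch2 z ht)
  have hbound : ∀ t ∈ Set.Ici z, ‖stJ z / stS * (t * stF2 t - 1)‖ ≤ 2 := by
    intro t ht
    rw [Real.norm_eq_abs]; exact bound2 z ht
  have := Convex.norm_image_sub_le_of_norm_hasDerivWithin_le hderiv hbound
    (convex_Ici z) hy hx
  simpa [Real.norm_eq_abs] using this

theorem steinSolution_lipschitz (z : ℝ) :
    ∀ x y : ℝ, |steinSolution z x - steinSolution z y| ≤ 2 * |x - y| := by
  have key : ∀ x y : ℝ, x ≤ y → |steinSolution z x - steinSolution z y| ≤ 2 * |x - y| := by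
    intro x y hxy
    rcases le_or_gt y z with hyz | hyz
    · exact lip1 z (le_trans hxy hyz) hyz
    · rcases le_or_gt z x with hzx | hzx
      · exact lip2 z hzx hyz.le
      · have h1 := lip1 z hzx.le le_rfl
        have h2 := lip2 z le_rfl hyz.le
        have := abs_sub_le (steinSolution z x) (steinSolution z z) (steinSolution z y)
        have e1 : |x - z| = z - x := by rw [abs_of_nonpos (by linarith)]; ring
        have e2 : |z - y| = y - z := by rw [abs_of_nonpos (by linarith)]; ring
        have e3 : |x - y| = y - x := by rw [abs_of_nonpos (by linarith)]; ring
        rw [e1] at h1; rw [e2] at h2; rw [e3]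
        linarith
  intro x y
  rcases le_or_gt x y with h | h
  · exact key x y h
  · have := key y x h.le
    rwa [abs_sub_comm, abs_sub_comm y x] at this
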